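/- Let A be a commutative domain containing ℚ and D a locally nilpotent derivation on A. The kernel of D is factorially closed in A: if a, b ∈ A are nonzero and ab ∈ ker D, then a ∈ ker D and b ∈ ker D. -/
import Mathlib

open Finset in
/-- Generalized Leibniz rule for iterates of a derivation. -/
lemma iterate_leibniz {A : Type*} [CommRing A] [Algebra ℚ A]
    (D : Derivation ℚ A A) (x y : A) (k : ℕ) :
    (⇑D)^[k] (x * y) = ∑ i ∈ range (k + 1),
      (k.choose i) • ((⇑D)^[i] x * (⇑D)^[k - i] y) := by
  have hD : ∀ (n : ℕ) (z : A), D (n • z) = n • D z := by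
    intro n z
    induction n with
    | zero => simp
    | succ n ih => rw [succ_nsmul, succ_nsmul, map_add, ih]
  induction k with
  | zero => simp
  | succ k ih =>
    rw [Function.iterate_succ_apply', ih, map_sum]
    have hterm : ∀ i ∈ range (k + 1),
        D ((k.choose i) • ((⇑D)^[i] x * (⇑D)^[k - i] y)) =
        (k.choose i) • ((⇑D)^[i+1] x * (⇑D)^[k - i] y)
        + (k.choose i) • ((⇑D)^[i] x * (⇑D)^[k - i + 1] y) := by
      intro i hi
      rw [hD, Derivation.leibniz, smul_eq_mul, smul_eq_mul,
        ← Function.iterate_succ_apply' D, ← Function.iterate_succ_apply' D,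
        smul_add, add_comm, mul_comm ((⇑D)^[k-i] y)]
    rw [Finset.sum_congr rfl hterm, Finset.sum_add_distrib]
    rw [Finset.sum_range_succ'
      (fun i => ((k+1).choose i) • ((⇑D)^[i] x * (⇑D)^[k + 1 - i] y)) (k+1)]
    simp only [Nat.choose_succ_succ, Nat.succ_eq_add_one, add_smul,
      Finset.sum_add_distrib, Nat.choose_zero_right, one_smul, Nat.sub_zero,
      Function.iterate_zero_apply]
    have e1 : ∑ i ∈ range (k + 1), (k.choose i) • ((⇑D)^[i+1] x * (⇑D)^[k + 1 - (i+1)] y)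
        = ∑ i ∈ range (k + 1), (k.choose i) • ((⇑D)^[i+1] x * (⇑D)^[k - i] y) := by
      apply Finset.sum_congr rfl; intro i hi
      have h : k + 1 - (i + 1) = k - i := by omega
      rw [h]
    have e2 : ∑ i ∈ range (k + 1), (k.choose (i+1)) • ((⇑D)^[i+1] x * (⇑D)^[k + 1 - (i+1)] y)
          + x * (⇑D)^[k+1] y
        = ∑ i ∈ range (k + 1), (k.choose i) • ((⇑D)^[i] x * (⇑D)^[k - i + 1] y) := by
      rw [Finset.sum_range_succ'
        (fun i => (k.choose i) • ((⇑D)^[i] x * (⇑D)^[k - i + 1] y)) k]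
      simp only [Nat.choose_zero_right, one_smul, Nat.sub_zero,
        Function.iterate_zero_apply]
      congr 1
      rw [Finset.sum_range_succ, Nat.choose_succ_self, zero_smul, add_zero]
      apply Finset.sum_congr rfl; intro i hi
      simp only [Finset.mem_range] at hi
      have h : k - (i + 1) + 1 = k + 1 - (i + 1) := by omega
      rw [h]
    rw [e1, ← e2]
    ring

/-- The kernel of a locally nilpotent derivation on a domain containing `ℚ`
is factorially closed. -/
theorem stmt_2 {A : Type*} [CommRing A] [IsDomain A] [Algebra ℚ A]
    (D : Derivation ℚ A A) (hln : ∀ x : A, ∃ n : ℕ, (⇑D)^[n] x = 0)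
    (a b : A) (ha : a ≠ 0) (hb : b ≠ 0) (hab : D (a * b) = 0) :
    D a = 0 ∧ D b = 0 := by
  have key : ∀ x : A, x ≠ 0 → ∃ p : ℕ, (⇑D)^[p] x ≠ 0 ∧ (⇑D)^[p+1] x = 0 := by
    intro x hx
    have h := hln x
    classical
    have hm : (⇑D)^[Nat.find h] x = 0 := Nat.find_spec h
    have hm1 : 0 < Nat.find h := by
      rcases Nat.eq_zero_or_pos (Nat.find h) with h0 | h0
      · exfalso; apply hx; simpa [h0] using hm
      · exact h0
    refine ⟨Nat.find h - 1, Nat.find_min h (by omega), by rwa [Nat.sub_add_cancel hm1]⟩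
  obtain ⟨p, hpa, hpa1⟩ := key a ha
  obtain ⟨q, hqb, hqb1⟩ := key b hb
  have hDn : ∀ k : ℕ, 1 ≤ k → (⇑D)^[k] (a * b) = 0 := by
    intro k hk
    induction k with
    | zero => omega
    | succ k ih =>
      rcases Nat.eq_zero_or_pos k with h0 | h0
      · simpa [h0] using hab
      · rw [Function.iterate_succ_apply', ih h0, map_zero]
  have ha_high : ∀ i, p < i → (⇑D)^[i] a = 0 := by
    intro i hi
    obtain ⟨j, rfl⟩ : ∃ j, i = (p + 1) + j := ⟨i - (p+1), by omega⟩
    rw [add_comm, Function.iterate_add_apply, hpa1]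
    simp [Function.iterate_fixed (map_zero D)]
  have hb_high : ∀ i, q < i → (⇑D)^[i] b = 0 := by
    intro i hi
    obtain ⟨j, rfl⟩ : ∃ j, i = (q + 1) + j := ⟨i - (q+1), by omega⟩
    rw [add_comm, Function.iterate_add_apply, hqb1]
    simp [Function.iterate_fixed (map_zero D)]
  have hsum : (⇑D)^[p + q] (a * b)
      = ((p + q).choose p) • ((⇑D)^[p] a * (⇑D)^[q] b) := by
    rw [iterate_leibniz]
    rw [Finset.sum_eq_single p]
    · rw [Nat.add_sub_cancel_left]
    · intro i hi hne
      rcases Nat.lt_or_ge p i with h | h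
      · rw [ha_high i h, zero_mul, smul_zero]
      · have hq' : q < p + q - i := by
          simp only [Finset.mem_range] at hi
          omega
        rw [hb_high _ hq', mul_zero, smul_zero]
    · intro hp; exfalso; apply hp; simp only [Finset.mem_range]; omega
  have hpq : p + q = 0 := by
    by_contra hne
    have h1 : 1 ≤ p + q := by omega
    rw [hDn _ h1] at hsum
    have hC : (0:ℕ) < (p + q).choose p := Nat.choose_pos (by omega)
    have hprod : (⇑D)^[p] a * (⇑D)^[q] b ≠ 0 := mul_ne_zero hpa hqb
    haveI : CharZero A :=
      charZero_of_injective_algebraMap (algebraMap ℚ A).injective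
    have hCA : (((p + q).choose p : ℕ) : A) ≠ 0 := Nat.cast_ne_zero.mpr hC.ne'
    rw [nsmul_eq_mul] at hsum
    exact (mul_ne_zero hCA hprod) hsum.symm
  have hp0 : p = 0 := by omega
  have hq0 : q = 0 := by omega
  subst hp0; subst hq0
  constructor
  · simpa using hpa1
  · simpa using hqb1
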